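/- arXiv:2403.01252 — 3 statements merged into one kernel-verified Lean document; each statement's English description precedes it below -/
import Mathlib

section
/- Let K₁, K₂ ⊆ ℝ² be compact sets with K₁ ∪ K₂ ≠ ∅, and define S₊ := {(a,b,c) ∈ ℝ³ : a·x² + b·x + c > y for all (x,y) ∈ K₁, and a + b·u + c·u² > v for all (u,v) ∈ K₂} and S₋ := {(a,b,c) ∈ ℝ³ : a·x² + b·x + c < y for all (x,y) ∈ K₁, and a + b·u + c·u² < v for all (u,v) ∈ K₂}. Then S₊ and S₋ are disjoint, and the topological space S₊ ∪ S₋ (with the subspace topology of ℝ³) has exactly two connected components, namely S₊ and S₋. -/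
private lemma convex_combo {A B y t s : ℝ} (hA : A > y) (hB : B > y)
    (ht : 0 ≤ t) (hs : 0 ≤ s) (hts : t + s = 1) : t * A + s * B > y := by
  rcases eq_or_lt_of_le ht with h | h
  · have : s = 1 := by linarith
    subst this; simp [← h]; linarith
  · have h1 : t * y < t * A := by nlinarith
    have h2 : s * y ≤ s * B := by nlinarith
    have h3 : t * y + s * y = y := by rw [← add_mul, hts, one_mul]
    linarith

/-- For compact `K₁, K₂ ⊆ ℝ²` with `K₁ ∪ K₂ ≠ ∅`, the sets `S₊` (here `Sp`)
and `S₋` (here `Sn`) of non-separating coefficient triples are disjoint, and the subspace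
`S₊ ∪ S₋` of `ℝ³` has exactly two connected components, namely `S₊` and `S₋`:
both are nonempty and connected, and every connected subset of the union lies in one of them. -/
theorem stmt_1 (K₁ K₂ : Set (ℝ × ℝ)) (hK₁ : IsCompact K₁) (hK₂ : IsCompact K₂)
    (hne : (K₁ ∪ K₂).Nonempty)
    (Sp Sn : Set (ℝ × ℝ × ℝ))
    (hSp : Sp = {p : ℝ × ℝ × ℝ |
      (∀ q ∈ K₁, p.1 * q.1 ^ 2 + p.2.1 * q.1 + p.2.2 > q.2) ∧
      (∀ q ∈ K₂, p.1 + p.2.1 * q.1 + p.2.2 * q.1 ^ 2 > q.2)})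
    (hSn : Sn = {p : ℝ × ℝ × ℝ |
      (∀ q ∈ K₁, p.1 * q.1 ^ 2 + p.2.1 * q.1 + p.2.2 < q.2) ∧
      (∀ q ∈ K₂, p.1 + p.2.1 * q.1 + p.2.2 * q.1 ^ 2 < q.2)}) :
    Disjoint Sp Sn ∧ Sp.Nonempty ∧ Sn.Nonempty ∧
    IsConnected Sp ∧ IsConnected Sn ∧
    (∀ C : Set (ℝ × ℝ × ℝ), C ⊆ Sp ∪ Sn → IsPreconnected C → C ⊆ Sp ∨ C ⊆ Sn) := by
  obtain ⟨q₀, hq₀⟩ := hne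
  -- bounds
  obtain ⟨B₁, hB₁⟩ := (hK₁.image continuous_snd).bddAbove
  obtain ⟨B₂, hB₂⟩ := (hK₂.image continuous_snd).bddAbove
  obtain ⟨L₁, hL₁⟩ := (hK₁.image continuous_snd).bddBelow
  obtain ⟨L₂, hL₂⟩ := (hK₂.image continuous_snd).bddBelow
  have hub₁ : ∀ q ∈ K₁, q.2 ≤ B₁ := fun q hq => hB₁ ⟨q, hq, rfl⟩
  have hub₂ : ∀ q ∈ K₂, q.2 ≤ B₂ := fun q hq => hB₂ ⟨q, hq, rfl⟩
  have hlb₁ : ∀ q ∈ K₁, L₁ ≤ q.2 := fun q hq => hL₁ ⟨q, hq, rfl⟩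
  have hlb₂ : ∀ q ∈ K₂, L₂ ≤ q.2 := fun q hq => hL₂ ⟨q, hq, rfl⟩
  set M : ℝ := |B₁| + |B₂| + |L₁| + |L₂| + 1 with hM
  have hMpos : 0 < M := by positivity
  have hMB₁ : B₁ < M := by
    have := abs_nonneg B₂; have := abs_nonneg L₁; have := abs_nonneg L₂
    have := le_abs_self B₁; linarith
  have hMB₂ : B₂ < M := by
    have := abs_nonneg B₁; have := abs_nonneg L₁; have := abs_nonneg L₂
    have := le_abs_self B₂; linarith
  have hML₁ : -M < L₁ := by
    have := abs_nonneg B₂; have := abs_nonneg B₁; have := abs_nonneg L₂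
    have := neg_abs_le L₁; linarith
  have hML₂ : -M < L₂ := by
    have := abs_nonneg B₂; have := abs_nonneg B₁; have := abs_nonneg L₁
    have := neg_abs_le L₂; linarith
  have hpSp : (M, (0:ℝ), M) ∈ Sp := by
    rw [hSp]
    constructor
    · intro q hq
      have h1 := hub₁ q hq
      have h2 := sq_nonneg q.1
      simp only
      nlinarith
    · intro q hq
      have h1 := hub₂ q hq
      have h2 := sq_nonneg q.1
      simp only
      nlinarith
  have hpSn : (-M, (0:ℝ), -M) ∈ Sn := by
    rw [hSn]
    constructor
    · intro q hq
      have h1 := hlb₁ q hq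
      have h2 := sq_nonneg q.1
      simp only
      nlinarith
    · intro q hq
      have h1 := hlb₂ q hq
      have h2 := sq_nonneg q.1
      simp only
      nlinarith
  -- convexity
  have hconvp : Convex ℝ Sp := by
    rw [hSp]
    intro p hp r hr t s ht hs hts
    constructor
    · intro q hq
      have hA := hp.1 q hq
      have hB := hr.1 q hq
      simp only [Prod.fst_add, Prod.snd_add, Prod.smul_fst, Prod.smul_snd, smul_eq_mul]
      have := convex_combo hA hB ht hs hts
      ring_nf at this ⊢
      linarith
    · intro q hq
      have hA := hp.2 q hq
      have hB := hr.2 q hq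
      simp only [Prod.fst_add, Prod.snd_add, Prod.smul_fst, Prod.smul_snd, smul_eq_mul]
      have := convex_combo hA hB ht hs hts
      ring_nf at this ⊢
      linarith
  have hconvn : Convex ℝ Sn := by
    rw [hSn]
    intro p hp r hr t s ht hs hts
    constructor
    · intro q hq
      have hA := hp.1 q hq
      have hB := hr.1 q hq
      simp only [Prod.fst_add, Prod.snd_add, Prod.smul_fst, Prod.smul_snd, smul_eq_mul]
      have := convex_combo (neg_lt_neg hA) (neg_lt_neg hB) ht hs hts
      ring_nf at this ⊢
      linarith
    · intro q hq
      have hA := hp.2 q hq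
      have hB := hr.2 q hq
      simp only [Prod.fst_add, Prod.snd_add, Prod.smul_fst, Prod.smul_snd, smul_eq_mul]
      have := convex_combo (neg_lt_neg hA) (neg_lt_neg hB) ht hs hts
      ring_nf at this ⊢
      linarith
  -- separating function
  classical
  set g : ℝ × ℝ × ℝ → ℝ := fun p =>
    if q₀ ∈ K₁ then p.1 * q₀.1 ^ 2 + p.2.1 * q₀.1 + p.2.2 - q₀.2
    else p.1 + p.2.1 * q₀.1 + p.2.2 * q₀.1 ^ 2 - q₀.2 with hg
  have hgc : Continuous g := by
    rw [hg]; split_ifs <;> fun_prop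
  have hgp : ∀ p ∈ Sp, 0 < g p := by
    intro p hp
    rw [hSp] at hp
    rw [hg]
    split_ifs with h
    · have := hp.1 q₀ h; simpa using by linarith
    · have hq₀' : q₀ ∈ K₂ := hq₀.resolve_left h
      have := hp.2 q₀ hq₀'; simpa using by linarith
  have hgn : ∀ p ∈ Sn, g p < 0 := by
    intro p hp
    rw [hSn] at hp
    rw [hg]
    split_ifs with h
    · have := hp.1 q₀ h; simpa using by linarith
    · have hq₀' : q₀ ∈ K₂ := hq₀.resolve_left h
      have := hp.2 q₀ hq₀'; simpa using by linarith
  have hdisj : Disjoint Sp Sn := by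
    rw [Set.disjoint_left]
    intro p hp hp'
    have := hgp p hp
    have := hgn p hp'
    linarith
  refine ⟨hdisj, ⟨_, hpSp⟩, ⟨_, hpSn⟩,
    ⟨⟨_, hpSp⟩, hconvp.isPreconnected⟩, ⟨⟨_, hpSn⟩, hconvn.isPreconnected⟩, ?_⟩
  intro C hCsub hCconn
  have hU : IsOpen {p : ℝ × ℝ × ℝ | 0 < g p} := isOpen_lt continuous_const hgc
  have hV : IsOpen {p : ℝ × ℝ × ℝ | g p < 0} := isOpen_lt hgc continuous_const
  have hUV : Disjoint {p : ℝ × ℝ × ℝ | 0 < g p} {p | g p < 0} := by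
    rw [Set.disjoint_left]; intro p h1 h2; exact absurd h1.out (not_lt.2 h2.out.le)
  have hsub : C ⊆ {p : ℝ × ℝ × ℝ | 0 < g p} ∪ {p | g p < 0} := by
    intro p hp
    rcases hCsub hp with h | h
    · exact Or.inl (hgp p h)
    · exact Or.inr (hgn p h)
  rcases hCconn.subset_or_subset hU hV hUV hsub with h | h
  · left
    intro p hp
    rcases hCsub hp with h' | h'
    · exact h'
    · exact absurd (h hp).out (not_lt.2 (hgn p h').le)
  · right
    intro p hp
    rcases hCsub hp with h' | h'
    · exact absurd (h hp).out (not_lt.2 (hgp p h').le)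
    · exact h'
end

section
/- Let b ≥ 3 be an odd integer and let L = ℤ² carry the symmetric bilinear form with Gram matrix [[−2, b], [b, −2]] in the standard basis u = (1,0), v = (0,1). Then the group of ℤ-linear isometries of L is generated by the three elements: −id, the swap σ(x₁, x₂) = (x₂, x₁), and the reflection r_v given by r_v(x) = x + B(x, v)·v (where B denotes the bilinear form). -/
def gramB (b : ℤ) (x y : Fin 2 → ℤ) : ℤ :=
  -2 * x 0 * y 0 + b * x 0 * y 1 + b * x 1 * y 0 + -2 * x 1 * y 1

def vecV : Fin 2 → ℤ := ![0, 1]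

def reflV (b : ℤ) : (Fin 2 → ℤ) ≃ₗ[ℤ] (Fin 2 → ℤ) where
  toFun x := x + gramB b x vecV • vecV
  invFun x := x + gramB b x vecV • vecV
  map_add' x y := by
    funext i
    fin_cases i <;>
      simp [gramB, vecV, Matrix.vecHead, Matrix.vecTail, Pi.add_apply, Pi.smul_apply, smul_eq_mul] <;> ring
  map_smul' c x := by
    funext i
    fin_cases i <;>
      simp [gramB, vecV, Matrix.vecHead, Matrix.vecTail, Pi.add_apply, Pi.smul_apply, smul_eq_mul] <;> ring
  left_inv x := by
    funext i
    fin_cases i <;>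
      simp [gramB, vecV, Matrix.vecHead, Matrix.vecTail, Pi.add_apply, Pi.smul_apply, smul_eq_mul] <;> ring
  right_inv x := by
    funext i
    fin_cases i <;>
      simp [gramB, vecV, Matrix.vecHead, Matrix.vecTail, Pi.add_apply, Pi.smul_apply, smul_eq_mul] <;> ring

namespace Stmt11Aux

/-- The coordinate swap as a linear automorphism. -/
def σ2 : (Fin 2 → ℤ) ≃ₗ[ℤ] (Fin 2 → ℤ) := LinearEquiv.funCongrLeft ℤ ℤ (Equiv.swap (0 : Fin 2) 1)

/-- The closure subgroup. -/
def C (b : ℤ) : Subgroup ((Fin 2 → ℤ) ≃ₗ[ℤ] (Fin 2 → ℤ)) :=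
  Subgroup.closure {LinearEquiv.neg ℤ, σ2, reflV b}

lemma neg_mem (b : ℤ) : LinearEquiv.neg ℤ ∈ C b :=
  Subgroup.subset_closure (Or.inl rfl)

lemma σ2_mem (b : ℤ) : σ2 ∈ C b :=
  Subgroup.subset_closure (Or.inr (Or.inl rfl))

lemma reflV_mem (b : ℤ) : reflV b ∈ C b :=
  Subgroup.subset_closure (Or.inr (Or.inr rfl))

lemma σ2_apply (x : Fin 2 → ℤ) : σ2 x = ![x 1, x 0] := by
  funext i
  fin_cases i <;> simp [σ2, LinearEquiv.funCongrLeft_apply, LinearMap.funLeft_apply]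

lemma reflV_apply (b : ℤ) (x : Fin 2 → ℤ) : reflV b x = ![x 0, b * x 0 - x 1] := by
  funext i
  fin_cases i <;> simp [reflV, gramB, vecV, Matrix.vecHead, Matrix.vecTail] <;> ring

lemma neg_apply (x : Fin 2 → ℤ) : (LinearEquiv.neg ℤ) x = ![-(x 0), -(x 1)] := by
  funext i
  fin_cases i <;> simp

lemma mulApply (f g : (Fin 2 → ℤ) ≃ₗ[ℤ] (Fin 2 → ℤ)) (x : Fin 2 → ℤ) : (f * g) x = f (g x) := rfl

lemma eta2 (x : Fin 2 → ℤ) : ![x 0, x 1] = x := by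
  funext i; fin_cases i <;> rfl

/-- the reflection in u -/
def reflU (b : ℤ) : (Fin 2 → ℤ) ≃ₗ[ℤ] (Fin 2 → ℤ) := σ2 * reflV b * σ2

lemma reflU_mem (b : ℤ) : reflU b ∈ C b :=
  mul_mem (mul_mem (σ2_mem b) (reflV_mem b)) (σ2_mem b)

lemma reflU_apply (b : ℤ) (x : Fin 2 → ℤ) : reflU b x = ![b * x 1 - x 0, x 1] := by
  rw [reflU, mulApply, mulApply, σ2_apply, reflV_apply, σ2_apply]
  simp

/-- extensionality on the standard basis -/
lemma ext2 {f g : (Fin 2 → ℤ) ≃ₗ[ℤ] (Fin 2 → ℤ)}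
    (h0 : f ![1, 0] = g ![1, 0]) (h1 : f ![0, 1] = g ![0, 1]) : f = g := by
  refine LinearEquiv.toLinearMap_injective (LinearMap.ext fun x => ?_)
  have hx : x = x 0 • ![(1 : ℤ), 0] + x 1 • ![(0 : ℤ), 1] := by
    funext i; fin_cases i <;> simp
  simp only [LinearEquiv.coe_coe]
  rw [hx, map_add, map_add, map_smul, map_smul, map_smul, map_smul, h0, h1]

/-- closure elements are isometries -/
lemma closure_isom (b : ℤ) : ∀ g ∈ C b, ∀ x y : Fin 2 → ℤ,
    gramB b (g x) (g y) = gramB b x y := by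
  have hsub : C b ≤
      { carrier := {g : (Fin 2 → ℤ) ≃ₗ[ℤ] (Fin 2 → ℤ) |
          ∀ x y : Fin 2 → ℤ, gramB b (g x) (g y) = gramB b x y}
        one_mem' := fun x y => rfl
        mul_mem' := by
          intro f g hf hg x y
          exact (hf (g x) (g y)).trans (hg x y)
        inv_mem' := by
          intro g hg x y
          have := hg (g⁻¹ x) (g⁻¹ y)
          rw [show g (g⁻¹ x) = x from g.apply_symm_apply x,
            show g (g⁻¹ y) = y from g.apply_symm_apply y] at this
          exact this.symm } := by
    rw [C]
    refine (Subgroup.closure_le _).mpr ?_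
    rintro g (rfl | rfl | rfl)
    · intro x y
      rw [neg_apply, neg_apply]
      simp only [gramB, Matrix.cons_val_zero, Matrix.cons_val_one, Matrix.head_cons]
      ring
    · intro x y
      rw [σ2_apply, σ2_apply]
      simp only [gramB, Matrix.cons_val_zero, Matrix.cons_val_one, Matrix.head_cons]
      ring
    · intro x y
      rw [reflV_apply, reflV_apply]
      simp only [gramB, Matrix.cons_val_zero, Matrix.cons_val_one, Matrix.head_cons]
      ring
  exact fun g hg => hsub hg

/-- descent for nonnegative solutions -/
lemma descent (b : ℤ) (hb : 3 ≤ b) : ∀ n : ℕ, ∀ p q : ℤ, 0 ≤ p → 0 ≤ q →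
    p.natAbs + q.natAbs = n → p ^ 2 - b * p * q + q ^ 2 = 1 →
    ∃ h ∈ C b, h ![p, q] = ![1, 0] := by
  intro n
  induction n using Nat.strong_induction_on with
  | _ n IH =>
    intro p q hp hq hn heq
    rcases eq_or_lt_of_le hq with hq0 | hqpos
    · -- q = 0, so p = 1
      have hp2 : p ^ 2 = 1 := by linear_combination heq + (q - b * p) * hq0
      have hf : (p - 1) * (p + 1) = 0 := by linear_combination hp2
      have hp1 : p = 1 := by
        rcases mul_eq_zero.mp hf with h | h
        · linarith
        · linarith
      refine ⟨1, one_mem _, ?_⟩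
      rw [hp1, ← hq0]
      rfl
    · rcases eq_or_lt_of_le hp with hp0 | hppos
      · -- p = 0, so q = 1
        have hq2 : q ^ 2 = 1 := by linear_combination heq + (p - b * q) * hp0
        have hf : (q - 1) * (q + 1) = 0 := by linear_combination hq2
        have hq1 : q = 1 := by
          rcases mul_eq_zero.mp hf with h | h
          · linarith
          · linarith
        refine ⟨σ2, σ2_mem b, ?_⟩
        rw [← hp0, hq1, σ2_apply]
        simp
      · -- p, q > 0
        have hp1 : 1 ≤ p := by omega
        have hq1 : 1 ≤ q := by omega
        have hpq : p ≠ q := by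
          intro h
          rw [h] at heq
          nlinarith
        rcases lt_or_gt_of_ne hpq with hlt | hgt
        · -- p < q : apply reflV, replacing q by b*p - q
          have key : q * (b * p - q) = p ^ 2 - 1 := by linear_combination -heq
          have hq' : 0 ≤ b * p - q := by nlinarith
          have hlt' : b * p - q < q := by nlinarith
          have heq' : p ^ 2 - b * p * (b * p - q) + (b * p - q) ^ 2 = 1 := by
            linear_combination heq
          obtain ⟨h, hhC, hh⟩ := IH (p.natAbs + (b * p - q).natAbs) (by omega)
            p (b * p - q) hp hq' rfl heq'
          refine ⟨h * reflV b, mul_mem hhC (reflV_mem b), ?_⟩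
          rw [mulApply, reflV_apply]
          simpa using hh
        · -- q < p : apply reflU, replacing p by b*q - p
          have key : p * (b * q - p) = q ^ 2 - 1 := by linear_combination -heq
          have hp' : 0 ≤ b * q - p := by nlinarith
          have hlt' : b * q - p < p := by nlinarith
          have heq' : (b * q - p) ^ 2 - b * (b * q - p) * q + q ^ 2 = 1 := by
            linear_combination heq
          obtain ⟨h, hhC, hh⟩ := IH ((b * q - p).natAbs + q.natAbs) (by omega)
            (b * q - p) q hp' hq rfl heq'
          refine ⟨h * reflU b, mul_mem hhC (reflU_mem b), ?_⟩
          rw [mulApply, reflU_apply]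
          simpa using hh

/-- descent for all solutions -/
lemma descent' (b : ℤ) (hb : 3 ≤ b) (p q : ℤ) (heq : p ^ 2 - b * p * q + q ^ 2 = 1) :
    ∃ h ∈ C b, h ![p, q] = ![1, 0] := by
  have hkey : (0 ≤ p ∧ 0 ≤ q) ∨ (p ≤ 0 ∧ q ≤ 0) := by
    rcases le_or_gt 0 p with hp | hp <;> rcases le_or_gt 0 q with hq | hq
    · exact Or.inl ⟨hp, hq⟩
    · -- 0 ≤ p, q < 0 : must have p = 0
      have hp0 : p = 0 := by
        rcases eq_or_lt_of_le hp with h0 | h0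
        · exact h0.symm
        · exfalso
          have h1 : 1 ≤ p := by omega
          have h2 : q ≤ -1 := by omega
          have h3 : 1 ≤ p * (-q) := by nlinarith
          nlinarith [h3, h1, h2, hb, heq]
      exact Or.inr ⟨le_of_eq hp0, hq.le⟩
    · -- p < 0, 0 ≤ q : must have q = 0
      have hq0 : q = 0 := by
        rcases eq_or_lt_of_le hq with h0 | h0
        · exact h0.symm
        · exfalso
          have h1 : 1 ≤ q := by omega
          have h2 : p ≤ -1 := by omega
          have h3 : 1 ≤ q * (-p) := by nlinarith
          nlinarith [h3, h1, h2, hb, heq]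
      exact Or.inr ⟨hp.le, le_of_eq hq0⟩
    · exact Or.inr ⟨hp.le, hq.le⟩
  rcases hkey with ⟨hp, hq⟩ | ⟨hp, hq⟩
  · exact descent b hb _ p q hp hq rfl heq
  · have heq' : (-p) ^ 2 - b * (-p) * (-q) + (-q) ^ 2 = 1 := by linear_combination heq
    obtain ⟨h, hhC, hh⟩ := descent b hb _ (-p) (-q) (by linarith) (by linarith) rfl heq'
    refine ⟨h * LinearEquiv.neg ℤ, mul_mem hhC (neg_mem b), ?_⟩
    rw [mulApply, neg_apply]
    simpa using hh

end Stmt11Aux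

open Stmt11Aux in
/-- For odd `b ≥ 3`, the group of ℤ-linear isometries of the lattice
`[−2, b, −2]` is generated by `−id`, the swap `u ↔ v`, and the reflection `r_v`. -/
theorem stmt_11 (b : ℤ) (hb : 3 ≤ b) (hodd : Odd b) :
    (∀ g ∈ Subgroup.closure
        ({LinearEquiv.neg ℤ, LinearEquiv.funCongrLeft ℤ ℤ (Equiv.swap (0 : Fin 2) 1), reflV b} :
          Set ((Fin 2 → ℤ) ≃ₗ[ℤ] (Fin 2 → ℤ))),
      ∀ x y : Fin 2 → ℤ, gramB b (g x) (g y) = gramB b x y) ∧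
    (∀ g : (Fin 2 → ℤ) ≃ₗ[ℤ] (Fin 2 → ℤ),
      (∀ x y : Fin 2 → ℤ, gramB b (g x) (g y) = gramB b x y) →
      g ∈ Subgroup.closure
        ({LinearEquiv.neg ℤ, LinearEquiv.funCongrLeft ℤ ℤ (Equiv.swap (0 : Fin 2) 1), reflV b} :
          Set ((Fin 2 → ℤ) ≃ₗ[ℤ] (Fin 2 → ℤ)))) := by
  have hCdef : Subgroup.closure
        ({LinearEquiv.neg ℤ, LinearEquiv.funCongrLeft ℤ ℤ (Equiv.swap (0 : Fin 2) 1), reflV b} :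
          Set ((Fin 2 → ℤ) ≃ₗ[ℤ] (Fin 2 → ℤ))) = C b := rfl
  rw [hCdef]
  constructor
  · exact closure_isom b
  · intro g hg
    -- the first column of g
    set w : Fin 2 → ℤ := g ![1, 0] with hw
    have hww : gramB b w w = -2 := by
      rw [hw, hg]
      simp [gramB]
    have heq : (w 0) ^ 2 - b * (w 0) * (w 1) + (w 1) ^ 2 = 1 := by
      rw [gramB] at hww
      linarith
    obtain ⟨h, hhC, hh⟩ := descent' b hb (w 0) (w 1) heq
    set k := h * g with hk
    have hkisom : ∀ x y : Fin 2 → ℤ, gramB b (k x) (k y) = gramB b x y := by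
      intro x y
      rw [hk, mulApply, mulApply]
      exact (closure_isom b h hhC (g x) (g y)).trans (hg x y)
    have hku : k ![1, 0] = ![1, 0] := by
      rw [hk, mulApply, ← hw, ← eta2 w]
      exact hh
    -- analyze the second column of k
    set z : Fin 2 → ℤ := k ![0, 1] with hz
    have e1 : -2 * z 0 + b * z 1 = b := by
      have := hkisom ![1, 0] ![0, 1]
      rw [hku, ← hz] at this
      rw [gramB] at this
      simp [gramB] at this ⊢
      linarith
    have e2 : (z 0) ^ 2 - b * (z 0) * (z 1) + (z 1) ^ 2 = 1 := by
      have := hkisom ![0, 1] ![0, 1]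
      rw [← hz, gramB] at this
      simp [gramB] at this
      linarith
    -- b odd forces z 1 odd
    have heven : Even (b * (z 1 - 1)) := ⟨z 0, by linarith⟩
    have hev2 : Even (z 1 - 1) := by
      rcases Int.even_mul.mp heven with hb2 | h
      · exact absurd hodd (by simpa [Int.not_odd_iff_even] using hb2)
      · exact h
    obtain ⟨t, ht⟩ := hev2
    have hs : z 1 = 2 * t + 1 := by linarith
    have hr2 : 2 * z 0 = 2 * (b * t) := by linear_combination -e1 + b * hs
    have hr : z 0 = b * t := by linarith
    rw [hr, hs] at e2
    have e3 : t * (t + 1) * (b ^ 2 - 4) = 0 := by linear_combination -e2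
    have hb4 : b ^ 2 - 4 ≠ 0 := by nlinarith
    have ht01 : t = 0 ∨ t = -1 := by
      rcases mul_eq_zero.mp e3 with h | h
      · rcases mul_eq_zero.mp h with h | h
        · exact Or.inl h
        · exact Or.inr (by linarith)
      · exact absurd h hb4
    have hzval : z = ![z 0, z 1] := (eta2 z).symm
    rcases ht01 with ht0 | htm1
    · -- k = 1, g = h⁻¹
      have hkv : k ![0, 1] = ![0, 1] := by
        rw [← hz, hzval, hr, hs, ht0]
        norm_num
      have hk1 : k = 1 := ext2 (by rw [hku]; rfl) (by rw [hkv]; rfl)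
      have : g = h⁻¹ := by
        have : h⁻¹ * k = g := by rw [hk, ← mul_assoc, inv_mul_cancel, one_mul]
        rw [← this, hk1, mul_one]
      rw [this]
      exact inv_mem hhC
    · -- k = neg * reflU, g = h⁻¹ * neg * reflU
      have hkv : k ![0, 1] = ![-b, -1] := by
        rw [← hz, hzval, hr, hs, htm1]
        norm_num
      have hcand : k = LinearEquiv.neg ℤ * reflU b := by
        refine ext2 ?_ ?_
        · rw [hku, mulApply, reflU_apply, neg_apply]
          norm_num
        · rw [hkv, mulApply, reflU_apply, neg_apply]
          norm_num
      have hgval : g = h⁻¹ * (LinearEquiv.neg ℤ * reflU b) := by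
        rw [← hcand, hk, ← mul_assoc, inv_mul_cancel, one_mul]
      rw [hgval]
      exact mul_mem (inv_mem hhC) (mul_mem (neg_mem b) (reflU_mem b))
end

section
/- Let L be a free ℤ-module of finite rank with a ℤ-valued symmetric bilinear form x·y, and let M₁, M₂ ⊆ L be submodules such that M₁ ∩ M₂ = 0, m₁·m₂ = 0 for all m₁ ∈ M₁ and m₂ ∈ M₂, and 2L ⊆ M₁ + M₂. Then there is a unique ℤ-linear map θ : L → L with θ(m) = m for all m ∈ M₁ and θ(m) = −m for all m ∈ M₂; explicitly, θ(x) = x − m₂ whenever 2x = m₁ + m₂ with mᵢ ∈ Mᵢ. Moreover θ is an involution (θ∘θ = id) and an isometry (θ(x)·θ(y) = x·y for all x, y ∈ L). -/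
/-- If `M₁, M₂` are submodules of a lattice `L` with `M₁ ∩ M₂ = 0`,
`M₁ ⊥ M₂`, and `2L ⊆ M₁ + M₂`, then there is a unique ℤ-linear `θ : L → L` with `θ = id`
on `M₁` and `θ = −id` on `M₂`; it satisfies `θx = x − m₂` whenever `2x = m₁ + m₂`
(`mᵢ ∈ Mᵢ`), is an involution, and an isometry. -/
theorem stmt_16 (L : Type*) [AddCommGroup L] [Module ℤ L] [Module.Free ℤ L] [Module.Finite ℤ L]
    (B : L →ₗ[ℤ] L →ₗ[ℤ] ℤ) (hsym : ∀ x y, B x y = B y x)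
    (M₁ M₂ : Submodule ℤ L) (hdisj : M₁ ⊓ M₂ = ⊥)
    (horth : ∀ m₁ ∈ M₁, ∀ m₂ ∈ M₂, B m₁ m₂ = 0)
    (h2 : ∀ x : L, (2 : ℤ) • x ∈ M₁ ⊔ M₂) :
    (∃! θ : L →ₗ[ℤ] L, (∀ m ∈ M₁, θ m = m) ∧ (∀ m ∈ M₂, θ m = -m)) ∧
    (∀ θ : L →ₗ[ℤ] L, ((∀ m ∈ M₁, θ m = m) ∧ (∀ m ∈ M₂, θ m = -m)) →
      ((∀ (x m₁ m₂ : L), m₁ ∈ M₁ → m₂ ∈ M₂ → (2 : ℤ) • x = m₁ + m₂ → θ x = x - m₂) ∧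
       (∀ x, θ (θ x) = x) ∧
       (∀ x y, B (θ x) (θ y) = B x y))) := by
  classical
  -- bridge between the `zsmul` appearing in the statement and the module smul
  have hbr := fun (n : ℤ) (v : L) => Int.cast_smul_eq_zsmul (R := ℤ) n v
  simp only [Int.cast_id] at hbr
  -- now rewrite the statement's zsmul into the module smul
  simp only [← hbr] at h2 ⊢
  -- uniqueness of the M₂-component
  have huniq : ∀ {m₁ m₂ n₁ n₂ : L}, m₁ ∈ M₁ → m₂ ∈ M₂ → n₁ ∈ M₁ → n₂ ∈ M₂ →
      m₁ + m₂ = n₁ + n₂ → m₂ = n₂ := by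
    intro m₁ m₂ n₁ n₂ h1 h2' h3 h4 heq
    have hmem : m₂ - n₂ ∈ M₁ ⊓ M₂ := by
      constructor
      · have h5 : m₂ - n₂ = n₁ - m₁ := by
          have h6 : m₁ + m₂ - (n₁ + n₂) = 0 := by rw [heq]; abel
          have h7 : m₂ - n₂ - (n₁ - m₁) = m₁ + m₂ - (n₁ + n₂) := by abel
          rw [h6] at h7
          exact sub_eq_zero.mp h7
        rw [h5]; exact sub_mem h3 h1
      · exact sub_mem h2' h4
    rw [hdisj] at hmem
    exact sub_eq_zero.mp ((Submodule.mem_bot ℤ).mp hmem)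
  have hdec : ∀ x : L, ∃ p : L × L, p.1 ∈ M₁ ∧ p.2 ∈ M₂ ∧ p.1 + p.2 = (2 : ℤ) • x := by
    intro x
    obtain ⟨a, ha, b, hb, hab⟩ := Submodule.mem_sup.mp (h2 x)
    refine ⟨(a, b), ha, hb, ?_⟩
    rw [← hbr]
    exact hab
  set c : L → L × L := fun x => (hdec x).choose with hc
  have hc1 : ∀ x, (c x).1 ∈ M₁ := fun x => (hdec x).choose_spec.1
  have hc2 : ∀ x, (c x).2 ∈ M₂ := fun x => (hdec x).choose_spec.2.1
  have hcsum : ∀ x, (c x).1 + (c x).2 = (2 : ℤ) • x := fun x => (hdec x).choose_spec.2.2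
  have hcsum' : ∀ x, (c x).1 + (c x).2 = x + x := by
    intro x; rw [hcsum, two_zsmul]
  have hadd : ∀ x y : L, (c (x + y)).2 = (c x).2 + (c y).2 := by
    intro x y
    refine huniq (hc1 (x + y)) (hc2 (x + y)) (add_mem (hc1 x) (hc1 y))
      (add_mem (hc2 x) (hc2 y)) ?_
    have h1 := hcsum' x
    have h2' := hcsum' y
    have h3 : (c x).1 + (c y).1 + ((c x).2 + (c y).2)
        = ((c x).1 + (c x).2) + ((c y).1 + (c y).2) := by abel
    rw [hcsum', h3, h1, h2']; abel
  have zmem : ∀ (N : Submodule ℤ L) (r : ℤ) (v : L), v ∈ N → r • v ∈ N := by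
    intro N r v hv
    rw [← hbr]
    exact N.smul_mem r hv
  have hsmul : ∀ (r : ℤ) (x : L), (c (r • x)).2 = r • (c x).2 := by
    intro r x
    refine huniq (hc1 (r • x)) (hc2 (r • x)) (zmem M₁ r _ (hc1 x))
      (zmem M₂ r _ (hc2 x)) ?_
    rw [hcsum, ← zsmul_add, hcsum]
    rw [← mul_zsmul, ← mul_zsmul, mul_comm]
  set θ₀ : L →ₗ[ℤ] L :=
    { toFun := fun x => x - (c x).2
      map_add' := by
        intro x y
        show x + y - (c (x + y)).2 = x - (c x).2 + (y - (c y).2)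
        rw [hadd]; abel
      map_smul' := by
        intro r x
        simp only [RingHom.id_apply]
        rw [hbr, hbr, hsmul, zsmul_sub] } with hθ₀
  have hθ₀apply : ∀ x, θ₀ x = x - (c x).2 := fun _ => rfl
  have hθ₀M₁ : ∀ m ∈ M₁, θ₀ m = m := by
    intro m hm
    have h7 : (c m).2 = 0 := by
      refine huniq (hc1 m) (hc2 m) (add_mem hm hm) (zero_mem M₂) ?_
      rw [hcsum', add_zero]
    rw [hθ₀apply, h7, sub_zero]
  have hθ₀M₂ : ∀ m ∈ M₂, θ₀ m = -m := by
    intro m hm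
    have h7 : (c m).2 = m + m := by
      refine huniq (hc1 m) (hc2 m) (zero_mem M₁) (add_mem hm hm) ?_
      rw [hcsum', zero_add]
    rw [hθ₀apply, h7]; abel
  have hinj : ∀ a b : L, (2 : ℤ) • a = (2 : ℤ) • b → a = b := by
    intro a b h
    rw [← hbr, ← hbr] at h
    exact smul_right_injective L (by norm_num : (2 : ℤ) ≠ 0) h
  have hkey : ∀ θ : L →ₗ[ℤ] L, (∀ m ∈ M₁, θ m = m) → (∀ m ∈ M₂, θ m = -m) →
      ∀ (x m₁ m₂ : L), m₁ ∈ M₁ → m₂ ∈ M₂ → (2 : ℤ) • x = m₁ + m₂ →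
      (2 : ℤ) • θ x = m₁ - m₂ := by
    intro θ hA hB x m₁ m₂ hm₁ hm₂ hx
    have h8 : θ ((2 : ℤ) • x) = m₁ - m₂ := by
      rw [hx, map_add, hA m₁ hm₁, hB m₂ hm₂]; abel
    rwa [map_zsmul] at h8
  have hform : ∀ θ : L →ₗ[ℤ] L, (∀ m ∈ M₁, θ m = m) → (∀ m ∈ M₂, θ m = -m) →
      ∀ (x m₁ m₂ : L), m₁ ∈ M₁ → m₂ ∈ M₂ → (2 : ℤ) • x = m₁ + m₂ → θ x = x - m₂ := by
    intro θ hA hB x m₁ m₂ hm₁ hm₂ hx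
    apply hinj
    rw [hkey θ hA hB x m₁ m₂ hm₁ hm₂ hx, zsmul_sub, hx, two_zsmul]
    abel
  constructor
  · refine ⟨θ₀, ⟨hθ₀M₁, hθ₀M₂⟩, ?_⟩
    rintro θ ⟨hA, hB⟩
    ext x
    have e1 := hform θ hA hB x (c x).1 (c x).2 (hc1 x) (hc2 x) (hcsum x).symm
    have e2 := hform θ₀ hθ₀M₁ hθ₀M₂ x (c x).1 (c x).2 (hc1 x) (hc2 x) (hcsum x).symm
    rw [e1, e2]
  · rintro θ ⟨hA, hB⟩
    refine ⟨fun x m₁ m₂ hm₁ hm₂ hx => hform θ hA hB x m₁ m₂ hm₁ hm₂ (by rw [hbr] at hx; exact hx), ?_, ?_⟩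
    · intro x
      have hx := (hcsum x).symm
      have h1 : θ x = x - (c x).2 := hform θ hA hB x _ _ (hc1 x) (hc2 x) hx
      have h2' : (2 : ℤ) • θ x = (c x).1 + (-(c x).2) := by
        rw [hkey θ hA hB x _ _ (hc1 x) (hc2 x) hx]; abel
      have h3 := hform θ hA hB (θ x) (c x).1 (-(c x).2) (hc1 x) (neg_mem (hc2 x)) h2'
      rw [h3, h1]; abel
    · intro x y
      have hx := (hcsum x).symm
      have hy := (hcsum y).symm
      have hθx : θ x + θ x = (c x).1 - (c x).2 := by
        rw [← two_zsmul]; exact hkey θ hA hB x _ _ (hc1 x) (hc2 x) hx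
      have hθy : θ y + θ y = (c y).1 - (c y).2 := by
        rw [← two_zsmul]; exact hkey θ hA hB y _ _ (hc1 y) (hc2 y) hy
      have hx' := hcsum' x
      have hy' := hcsum' y
      have e1 : B (θ x + θ x) (θ y + θ y) = (4 : ℤ) * B (θ x) (θ y) := by
        simp only [map_add, LinearMap.add_apply]; ring
      have e2 : B (x + x) (y + y) = (4 : ℤ) * B x y := by
        simp only [map_add, LinearMap.add_apply]; ring
      rw [hθx, hθy] at e1
      rw [← hx', ← hy'] at e2
      have d1 : B (c x).1 (c y).2 = 0 := horth _ (hc1 x) _ (hc2 y)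
      have d2 : B (c x).2 (c y).1 = 0 := by
        rw [hsym]; exact horth _ (hc1 y) _ (hc2 x)
      simp only [map_sub, map_add, LinearMap.sub_apply, LinearMap.add_apply] at e1 e2
      rw [d1, d2] at e1 e2
      linarith
end
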